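/- Let k be a field of characteristic ≠ 2 and a,b,c ∈ k^×, and consider the k-involution σ of k(x,y,z) given by σ(x) = −x, σ(y) = a/y, σ(z) = (−b x² + c)/z. Then the fixed field k(x,y,z)^{⟨σ⟩} equals k(z0,z1,z2,z3) where the generators satisfy the single relation z0² = (z1² − a)(z2² − b)(z3² − c). -/

import Mathlib

noncomputable section

namespace Paper

open Function

variable {G : Type} [Group G]

/-- The Tate cohomology `Ĥ⁻¹` of a finite group acting on a `ℤ`-module vanishes:
every element killed by the norm map lies in the augmentation submodule. -/
def Hneg1Vanish [Finite G] {M : Type} [AddCommGroup M] [Module ℤ M]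
    (ρ : Representation ℤ G M) : Prop :=
  ∀ m : M, (∑ᶠ g : G, ρ g m) = 0 →
    m ∈ Submodule.span ℤ {x : M | ∃ (g : G) (y : M), x = ρ g y - y}

/-- The Tate cohomology `Ĥ⁰` vanishes: every invariant element is a norm. -/
def Hhat0Vanish [Finite G] {M : Type} [AddCommGroup M] [Module ℤ M]
    (ρ : Representation ℤ G M) : Prop :=
  ∀ m : M, (∀ g : G, ρ g m = m) → ∃ y : M, m = ∑ᶠ g : G, ρ g y

/-- `H¹` vanishes: every inhomogeneous 1-cocycle is a 1-coboundary. -/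
def H1Vanish {M : Type} [AddCommGroup M] [Module ℤ M]
    (ρ : Representation ℤ G M) : Prop :=
  ∀ f : G → M, (∀ g h : G, f (g * h) = ρ g (f h) + f g) →
    ∃ m : M, ∀ g : G, f g = ρ g m - m

/-- A `G`-lattice: a finitely generated `ℤ`-free module with a `G`-action. -/
structure GLat (G : Type) [Group G] : Type 1 where
  carrier : Type
  [ab : AddCommGroup carrier]
  [mod : Module ℤ carrier]
  [free : Module.Free ℤ carrier]
  [fin : Module.Finite ℤ carrier]
  ρ : Representation ℤ G carrier

attribute [instance] GLat.ab GLat.mod GLat.free GLat.fin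

attribute [local instance 2000] Prod.instModule

instance : CoeSort (GLat G) Type := ⟨GLat.carrier⟩

/-- Build a `G`-lattice from a representation on a finite free `ℤ`-module. -/
def ofRep (M : Type) [AddCommGroup M] [Module ℤ M] [Module.Free ℤ M] [Module.Finite ℤ M]
    (ρ : Representation ℤ G M) : GLat G :=
  { carrier := M, ρ := ρ }

namespace GLat

/-- Direct sum of two `G`-lattices. -/
def sum (M N : GLat G) : GLat G where
  carrier := M.carrier × N.carrier
  ab := Prod.instAddCommGroup
  mod := Prod.instModule
  free := Module.Free.prod ℤ M.carrier N.carrier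
  fin := Module.Finite.prod
  ρ :=
    { toFun := fun g => (M.ρ g).prodMap (N.ρ g)
      map_one' := by
        letI : Module ℤ (M.carrier × N.carrier) := Prod.instModule
        refine LinearMap.ext fun x => ?_
        simp
      map_mul' := fun g h => by
        letI : Module ℤ (M.carrier × N.carrier) := Prod.instModule
        refine LinearMap.ext fun x => ?_
        simp }

/-- Equivariant isomorphism of `G`-lattices. -/
def Iso (M N : GLat G) : Prop :=
  ∃ e : M.carrier ≃ₗ[ℤ] N.carrier, ∀ (g : G) (m : M.carrier), e (M.ρ g m) = N.ρ g (e m)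

/-- A `ℤ`-linear map of `G`-lattices is equivariant. -/
def IsEquivariant (M N : GLat G) (f : M.carrier →ₗ[ℤ] N.carrier) : Prop :=
  ∀ (g : G) (m : M.carrier), f (M.ρ g m) = N.ρ g (f m)

/-- A permutation `G`-lattice: it has a `ℤ`-basis permuted by `G`. -/
def IsPermutation (M : GLat G) : Prop :=
  ∃ (ι : Type) (_ : Fintype ι) (b : Module.Basis ι ℤ M.carrier) (σ : G →* Equiv.Perm ι),
    ∀ (g : G) (i : ι), M.ρ g (b i) = b (σ g i)

/-- A stably permutation `G`-lattice. -/
def IsStablyPermutation (M : GLat G) : Prop :=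
  ∃ P Q : GLat G, P.IsPermutation ∧ Q.IsPermutation ∧ (M.sum P).Iso Q

/-- An invertible `G`-lattice: a direct summand of a permutation lattice. -/
def IsInvertible (M : GLat G) : Prop :=
  ∃ N Q : GLat G, Q.IsPermutation ∧ (M.sum N).Iso Q

/-- Flabby: `Ĥ⁻¹(H, M) = 0` for every subgroup `H ≤ G`. -/
def IsFlabby [Finite G] (M : GLat G) : Prop :=
  ∀ H : Subgroup G, Hneg1Vanish (MonoidHom.comp M.ρ H.subtype)

/-- Coflabby: `H¹(H, M) = 0` for every subgroup `H ≤ G`. -/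
def IsCoflabby (M : GLat G) : Prop :=
  ∀ H : Subgroup G, H1Vanish (MonoidHom.comp M.ρ H.subtype)

/-- Restriction of a `G`-lattice to a subgroup `H`. -/
def res (H : Subgroup G) (M : GLat G) : GLat H :=
  { carrier := M.carrier, ρ := MonoidHom.comp M.ρ H.subtype }

end GLat

/-- A flabby resolution `0 → M → P → F → 0` of a `G`-lattice `M`:
`P` is permutation and `F` is flabby. -/
structure FlabbyResolution [Finite G] (M : GLat G) : Type 1 where
  P : GLat G
  F : GLat G
  incl : M.carrier →ₗ[ℤ] P.carrier
  proj : P.carrier →ₗ[ℤ] F.carrier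
  equiv_incl : GLat.IsEquivariant M P incl
  equiv_proj : GLat.IsEquivariant P F proj
  inj : Function.Injective incl
  surj : Function.Surjective proj
  exact : LinearMap.range incl = LinearMap.ker proj
  permP : P.IsPermutation
  flabbyF : F.IsFlabby

/-- The flabby class `[M]^{fl}` is zero: the flabby part of a flabby resolution
is stably permutation. -/
def FlabbyClassZero [Finite G] (M : GLat G) : Prop :=
  ∃ R : FlabbyResolution M, R.F.IsStablyPermutation

/-- The flabby class `[M]^{fl}` is invertible. -/
def FlabbyClassInvertible [Finite G] (M : GLat G) : Prop :=
  ∃ R : FlabbyResolution M, R.F.IsInvertible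

/-- The permutation `G`-lattice `ℤ[S]` on a finite `G`-set `S`. -/
def ofMulActionGLat (G : Type) [Group G] (S : Type) [MulAction G S] [Finite S] : GLat G :=
  letI : Fintype S := Fintype.ofFinite S
  { carrier := S →₀ ℤ
    fin := Module.Finite.equiv (Finsupp.linearEquivFunOnFinite ℤ ℤ S).symm
    ρ :=
      { toFun := fun g => Finsupp.lmapDomain ℤ ℤ (g • ·)
        map_one' := by ext x y; simp
        map_mul' := fun x y => by ext z w; simp [mul_smul] } }

/-- The trivial rank-one `G`-lattice `ℤ`. -/
def trivialGLat (G : Type) [Group G] : GLat G :=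
  { carrier := ℤ, ρ := (1 : Representation ℤ G ℤ) }

open Polynomial in
theorem aux_sq_ne {k K : Type} [Field k] [Field K] [Algebra k K]
    (y : K) (a : k) (h : Transcendental k y) : y ^ 2 ≠ algebraMap k K a := by
  intro he
  exact h ⟨X ^ 2 - C a, X_pow_sub_C_ne_zero two_pos a, by simp [he]⟩

theorem aux_fix {k K : Type} [Field k] [Field K] [Algebra k K]
    (σ : K ≃ₐ[k] K) {u : K} (h : σ u = u) :
    u ∈ IntermediateField.fixedField (Subgroup.zpowers σ) := by
  have hinv : σ⁻¹ u = u := by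
    conv_lhs => rw [← h]
    exact σ.symm_apply_apply u
  have key : ∀ n : ℤ, (σ ^ n) u = u := by
    intro n
    induction n using Int.induction_on with
    | zero => simp
    | succ i ih => rw [zpow_add_one, AlgEquiv.mul_apply, h, ih]
    | pred i ih => rw [zpow_sub_one, AlgEquiv.mul_apply, hinv, ih]
  intro g
  obtain ⟨n, hn⟩ := Subgroup.mem_zpowers_iff.mp g.2
  show (g : K ≃ₐ[k] K) u = u
  rw [← hn]; exact key n

theorem aux_fixed_apply {k K : Type} [Field k] [Field K] [Algebra k K]
    (σ : K ≃ₐ[k] K) {u : K}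
    (h : u ∈ IntermediateField.fixedField (Subgroup.zpowers σ)) : σ u = u :=
  h ⟨σ, Subgroup.mem_zpowers σ⟩

theorem aux_trans {k K : Type} [Field k] [Field K] [Algebra k K]
    (x y z : K) (hind : AlgebraicIndependent k ![x, y, z]) :
    Transcendental (Algebra.adjoin k (Set.range (fun _ : Fin 1 => x))) z := by
  have hcomp : AlgebraicIndependent k
      (fun o : Option (Fin 1) => o.elim z (fun _ => x)) := by
    have hf : Function.Injective
        (fun o : Option (Fin 1) => o.elim (2 : Fin 3) (fun _ => 0)) := by
      intro o1 o2 h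
      cases o1 <;> cases o2 <;> simp_all [Fin.ext_iff]
    have := hind.comp _ hf
    convert this using 1
    funext o
    cases o <;> simp
  have hbase : AlgebraicIndependent k (fun _ : Fin 1 => x) :=
    hcomp.comp Option.some (Option.some_injective _)
  exact (hbase.option_iff_transcendental z).mp hcomp

open Polynomial in
set_option synthInstance.maxHeartbeats 1000000 in
theorem aux_hQ {k K : Type} [Field k] [Field K] [Algebra k K] (x z : K) (b c : k)
    (hTz : Transcendental (Algebra.adjoin k (Set.range (fun _ : Fin 1 => x))) z) :
    (z ^ 2 - algebraMap k K b * x ^ 2 + algebraMap k K c) ^ 2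
      - 4 * algebraMap k K c * z ^ 2 ≠ 0 := by
  set R' := Algebra.adjoin k (Set.range (fun _ : Fin 1 => x)) with hR'
  have hxmem : x ∈ R' := Algebra.subset_adjoin ⟨0, rfl⟩
  set xx : R' := ⟨x, hxmem⟩ with hxx
  set u : R' := algebraMap k R' c - algebraMap k R' b * xx ^ 2 with hu
  set P : R'[X] := X ^ 4 + C (2 * u - algebraMap k R' (4 * c)) * X ^ 2 + C (u ^ 2) with hP
  have hP0 : P ≠ 0 := by
    intro h0
    have h4 : P.coeff 4 = 1 := by
      rw [hP, coeff_add, coeff_add, coeff_X_pow, coeff_C_mul, coeff_X_pow, coeff_C]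
      norm_num
    rw [h0, coeff_zero] at h4
    have : ((1 : R') : K) = ((0 : R') : K) := by rw [h4]
    simp at this
  intro hzero
  refine hTz ⟨P, hP0, ?_⟩
  have hval : ((aeval z) P : K) = z ^ 4
      + ((2 * u - algebraMap k R' (4 * c) : R') : K) * z ^ 2 + ((u ^ 2 : R') : K) := by
    simp only [hP, map_add, map_mul, map_pow, aeval_X, aeval_C]
    rfl
  have hucoe : ((u : K)) = algebraMap k K c - algebraMap k K b * x ^ 2 := by
    rw [hu]; push_cast; ring
  rw [hval]
  push_cast
  rw [hucoe]
  rw [show ((2 : R') : K) = 2 from by norm_cast,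
    show (algebraMap k K) 4 = 4 from map_ofNat _ 4]
  linear_combination hzero

/-- Yamasaki, Lemma 4.3(i). Let `k` be a field of characteristic `≠ 2`,
`K = k(x,y,z)` a rational function field in three variables, and `σ` the `k`-involution
with `σx = −x`, `σy = a/y`, `σz = (−bx²+c)/z` (`a,b,c ∈ kˣ`). Then the fixed field of
`σ` is `k(z₀,z₁,z₂,z₃)` with the single relation `z₀² = (z₁²−a)(z₂²−b)(z₃²−c)`. -/
theorem fixed_field_of_involution_yamasaki
    (k K : Type) [Field k] [Field K] [Algebra k K] (h2 : (2 : k) ≠ 0)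
    (a b c : k) (ha : a ≠ 0) (hb : b ≠ 0) (hc : c ≠ 0)
    (x y z : K)
    (hind : AlgebraicIndependent k ![x, y, z])
    (hgen : IntermediateField.adjoin k ({x, y, z} : Set K) = ⊤)
    (σ : K ≃ₐ[k] K)
    (hσx : σ x = -x)
    (hσy : σ y = algebraMap k K a / y)
    (hσz : σ z = (-(algebraMap k K b) * x ^ 2 + algebraMap k K c) / z) :
    ∃ z0 z1 z2 z3 : K,
      IntermediateField.adjoin k ({z0, z1, z2, z3} : Set K) =
        IntermediateField.fixedField (Subgroup.zpowers σ) ∧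
      z0 ^ 2 = (z1 ^ 2 - algebraMap k K a) * (z2 ^ 2 - algebraMap k K b) *
        (z3 ^ 2 - algebraMap k K c) := by
  have hInj : Function.Injective (algebraMap k K) := (algebraMap k K).injective
  set ca := algebraMap k K a with hcadef
  set cb := algebraMap k K b with hcbdef
  set cc := algebraMap k K c with hccdef
  have hca0 : ca ≠ 0 := fun h => ha (hInj (by rw [map_zero]; exact h))
  have hcb0 : cb ≠ 0 := fun h => hb (hInj (by rw [map_zero]; exact h))
  have hcc0 : cc ≠ 0 := fun h => hc (hInj (by rw [map_zero]; exact h))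
  have h2K : (2 : K) ≠ 0 := fun h => h2 (hInj (by rw [map_ofNat, map_zero]; exact h))
  have hTx : Transcendental k x := by simpa using hind.transcendental 0
  have hTy : Transcendental k y := by simpa using hind.transcendental 1
  have hTz : Transcendental k z := by simpa using hind.transcendental 2
  have hx0 : x ≠ 0 := fun h0 => hTx (h0 ▸ isAlgebraic_zero)
  have hy0 : y ≠ 0 := fun h0 => hTy (h0 ▸ isAlgebraic_zero)
  have hz0 : z ≠ 0 := fun h0 => hTz (h0 ▸ isAlgebraic_zero)
  have hya : y ^ 2 ≠ ca := aux_sq_ne y a hTy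
  have hbxc : cc - cb * x ^ 2 ≠ 0 := by
    intro h
    apply aux_sq_ne x (c / b) hTx
    rw [map_div₀, ← hcbdef, ← hccdef, eq_div_iff hcb0]
    linear_combination -h
  have hQ : (z ^ 2 - cb * x ^ 2 + cc) ^ 2 - 4 * cc * z ^ 2 ≠ 0 :=
    aux_hQ x z b c (aux_trans x y z hind)
  -- the invariants
  set z1 : K := (y ^ 2 + ca) / (2 * y) with hz1def
  set w1 : K := (y ^ 2 - ca) / (2 * y) with hw1def
  set z3 : K := (z ^ 2 - cb * x ^ 2 + cc) / (2 * z) with hz3def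
  set z2 : K := (z ^ 2 + cb * x ^ 2 - cc) / (2 * x * z) with hz2def
  set z0 : K := w1 * (z3 ^ 2 - cc) / x with hz0def
  have h2y : (2 : K) * y ≠ 0 := mul_ne_zero h2K hy0
  have h2z : (2 : K) * z ≠ 0 := mul_ne_zero h2K hz0
  have h2xz : (2 : K) * x * z ≠ 0 := mul_ne_zero (mul_ne_zero h2K hx0) hz0
  have h4K : (4 : K) ≠ 0 := by
    intro h; apply h2K
    have : (2 : K) * 2 = 4 := by norm_num
    rcases mul_eq_zero.mp (this.trans h) with h' | h' <;> exact h'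
  have hw1 : w1 ≠ 0 := div_ne_zero (sub_ne_zero.mpr hya) h2y
  have h3c : z3 ^ 2 - cc
      = ((z ^ 2 - cb * x ^ 2 + cc) ^ 2 - 4 * cc * z ^ 2) / (4 * z ^ 2) := by
    rw [hz3def]; field_simp; ring
  have hz3c : z3 ^ 2 - cc ≠ 0 := by
    rw [h3c]
    exact div_ne_zero hQ (mul_ne_zero h4K (pow_ne_zero 2 hz0))
  have hz0ne : z0 ≠ 0 := by
    rw [hz0def]; exact div_ne_zero (mul_ne_zero hw1 hz3c) hx0
  have hne : -cb * x ^ 2 + cc ≠ 0 := by intro h; apply hbxc; linear_combination h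
  -- sigma-invariance
  have hσca : σ ca = ca := σ.commutes a
  have hσcb : σ cb = cb := σ.commutes b
  have hσcc : σ cc = cc := σ.commutes c
  have hσ2 : σ (2 : K) = 2 := map_ofNat σ 2
  have hσz1 : σ z1 = z1 := by
    rw [hz1def, map_div₀, map_add, map_mul, map_pow, hσy, hσca, hσ2]
    field_simp
    ring
  have hσw1 : σ w1 = -w1 := by
    rw [hw1def, map_div₀, map_sub, map_mul, map_pow, hσy, hσca, hσ2]
    field_simp
    ring
  have hdivne : (-cb * x ^ 2 + cc) / z ≠ 0 := div_ne_zero hne hz0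
  have hσz3 : σ z3 = z3 := by
    rw [hz3def, map_div₀, map_add, map_sub, map_mul, map_mul, map_pow, map_pow,
      hσz, hσx, hσcb, hσcc, hσ2]
    rw [div_eq_div_iff (mul_ne_zero h2K hdivne) h2z]
    field_simp
    ring
  have hσz2 : σ z2 = z2 := by
    rw [hz2def, map_div₀, map_sub, map_add, map_mul, map_mul, map_mul, map_pow, map_pow,
      hσz, hσx, hσcb, hσcc, hσ2]
    rw [div_eq_div_iff (mul_ne_zero (mul_ne_zero h2K (neg_ne_zero.mpr hx0)) hdivne) h2xz]
    field_simp
    ring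
  have hσz0 : σ z0 = z0 := by
    rw [hz0def, map_div₀, map_mul, map_sub, map_pow, hσw1, hσz3, hσcc, hσx]
    rw [neg_mul, neg_div_neg_eq]
  -- the relation
  have e1 : z1 ^ 2 - ca = w1 ^ 2 := by
    rw [hz1def, hw1def]; field_simp; ring
  have e2 : z2 ^ 2 - cb = (z3 ^ 2 - cc) / x ^ 2 := by
    rw [hz2def, hz3def]; field_simp; ring
  have hrel : z0 ^ 2 = (z1 ^ 2 - ca) * (z2 ^ 2 - cb) * (z3 ^ 2 - cc) := by
    rw [e1, e2, hz0def]
    field_simp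
  -- the field L
  set L := IntermediateField.adjoin k ({z0, z1, z2, z3} : Set K) with hLdef
  have m0 : z0 ∈ L := IntermediateField.subset_adjoin k _ (by simp)
  have m1 : z1 ∈ L := IntermediateField.subset_adjoin k _ (by simp)
  have m2 : z2 ∈ L := IntermediateField.subset_adjoin k _ (by simp)
  have m3 : z3 ∈ L := IntermediateField.subset_adjoin k _ (by simp)
  have h2L : (2 : K) ∈ L := by
    have := L.algebraMap_mem (2 : k)
    rwa [map_ofNat] at this
  have hcaL : ca ∈ L := by rw [hcadef]; exact L.algebraMap_mem a
  have hccL : cc ∈ L := by rw [hccdef]; exact L.algebraMap_mem c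
  have hLF : L ≤ IntermediateField.fixedField (Subgroup.zpowers σ) := by
    rw [hLdef, IntermediateField.adjoin_le_iff]
    rintro s hs
    simp only [Set.mem_insert_iff, Set.mem_singleton_iff] at hs
    rcases hs with rfl | rfl | rfl | rfl
    · exact aux_fix σ hσz0
    · exact aux_fix σ hσz1
    · exact aux_fix σ hσz2
    · exact aux_fix σ hσz3
  have hyL : y ∉ L := by
    intro hy
    have hfix := aux_fixed_apply σ (hLF hy)
    rw [hσy] at hfix
    apply hya
    rw [div_eq_iff hy0] at hfix
    linear_combination -hfix
  have hy2 : y ^ 2 = 2 * z1 * y - ca := by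
    rw [hz1def]; field_simp; ring
  -- the subfield M = L + L*y
  set Mset : Set K := {w | ∃ p ∈ L, ∃ q ∈ L, w = p + q * y} with hMsetdef
  have hMadd : ∀ w ∈ Mset, ∀ v ∈ Mset, w + v ∈ Mset := by
    rintro w ⟨p, hp, q, hq, rfl⟩ v ⟨r, hr, s, hs, rfl⟩
    exact ⟨p + r, add_mem hp hr, q + s, add_mem hq hs, by ring⟩
  have hMmul : ∀ w ∈ Mset, ∀ v ∈ Mset, w * v ∈ Mset := by
    rintro w ⟨p, hp, q, hq, rfl⟩ v ⟨r, hr, s, hs, rfl⟩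
    refine ⟨p * r - ca * (q * s), sub_mem (mul_mem hp hr) (mul_mem hcaL (mul_mem hq hs)),
      p * s + q * r + 2 * z1 * (q * s),
      add_mem (add_mem (mul_mem hp hs) (mul_mem hq hr))
        (mul_mem (mul_mem h2L m1) (mul_mem hq hs)), ?_⟩
    linear_combination (q * s) * hy2
  have hMinv : ∀ w ∈ Mset, w⁻¹ ∈ Mset := by
    rintro w ⟨p, hp, q, hq, rfl⟩
    by_cases hqz : q = 0
    · refine ⟨p⁻¹, inv_mem hp, 0, zero_mem L, ?_⟩
      rw [hqz]; ring_nf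
    · by_cases hw0 : p + q * y = 0
      · rw [hw0]
        exact ⟨0, zero_mem L, 0, zero_mem L, by simp⟩
      · set N : K := p ^ 2 + 2 * z1 * p * q + ca * q ^ 2 with hNdef
        have hfac : (p + q * y) * ((p + 2 * z1 * q) - q * y) = N := by
          rw [hNdef]; linear_combination (-(q ^ 2)) * hy2
        have hsec : (p + 2 * z1 * q) - q * y ≠ 0 := by
          intro h0
          apply hyL
          have hyval : y = (p + 2 * z1 * q) / q := by
            rw [eq_div_iff hqz]; linear_combination -h0
          rw [hyval]
          exact div_mem (add_mem hp (mul_mem (mul_mem h2L m1) hq)) hq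
        have hN0 : N ≠ 0 := by rw [← hfac]; exact mul_ne_zero hw0 hsec
        have hNL : N ∈ L := by
          rw [hNdef]
          exact add_mem (add_mem (pow_mem hp 2)
            (mul_mem (mul_mem (mul_mem h2L m1) hp) hq)) (mul_mem hcaL (pow_mem hq 2))
        refine ⟨(p + 2 * z1 * q) / N, div_mem (add_mem hp (mul_mem (mul_mem h2L m1) hq)) hNL,
          -q / N, div_mem (neg_mem hq) hNL, ?_⟩
        have e : (p + 2 * z1 * q) / N + (-q / N) * y = ((p + 2 * z1 * q) - q * y) / N := by
          ring
        rw [e, eq_div_iff hN0, ← hfac, inv_mul_cancel_left₀ hw0]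
  -- assemble M
  set M : IntermediateField k K :=
    { carrier := Mset
      mul_mem' := fun hw hv => hMmul _ hw _ hv
      add_mem' := fun hw hv => hMadd _ hw _ hv
      one_mem' := ⟨1, one_mem L, 0, zero_mem L, by ring⟩
      zero_mem' := ⟨0, zero_mem L, 0, zero_mem L, by ring⟩
      algebraMap_mem' := fun r => ⟨algebraMap k K r, L.algebraMap_mem r, 0, zero_mem L, by ring⟩
      inv_mem' := hMinv } with hMdef
  have hyM : y ∈ Mset := ⟨0, zero_mem L, 1, one_mem L, by ring⟩
  have hqxL : (z3 ^ 2 - cc) / z0 ∈ L := div_mem (sub_mem (pow_mem m3 2) hccL) m0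
  have hyz1 : y - z1 = w1 := by
    rw [hz1def, hw1def]; field_simp; ring
  have hz0x : z0 * x = w1 * (z3 ^ 2 - cc) := by
    rw [hz0def]; field_simp
  have hx' : x = (y - z1) * ((z3 ^ 2 - cc) / z0) := by
    rw [hyz1, mul_div_assoc', ← hz0x, mul_div_cancel_left₀ _ hz0ne]
  have hxeq : x = -(z1 * ((z3 ^ 2 - cc) / z0)) + ((z3 ^ 2 - cc) / z0) * y := by
    linear_combination hx'
  have hxM : x ∈ Mset :=
    ⟨-(z1 * ((z3 ^ 2 - cc) / z0)), neg_mem (mul_mem m1 hqxL), (z3 ^ 2 - cc) / z0, hqxL, hxeq⟩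
  have hz313 : z = z3 + x * z2 := by
    rw [hz3def, hz2def]; field_simp; ring
  have hzM : z ∈ Mset := by
    refine ⟨z3 + -(z1 * ((z3 ^ 2 - cc) / z0)) * z2,
      add_mem m3 (mul_mem (neg_mem (mul_mem m1 hqxL)) m2),
      (z3 ^ 2 - cc) / z0 * z2, mul_mem hqxL m2, ?_⟩
    linear_combination hz313 + z2 * hxeq
  have hMtop : ∀ w : K, w ∈ Mset := by
    have hle : IntermediateField.adjoin k ({x, y, z} : Set K) ≤ M := by
      rw [IntermediateField.adjoin_le_iff]
      rintro s hs
      simp only [Set.mem_insert_iff, Set.mem_singleton_iff] at hs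
      rcases hs with rfl | rfl | rfl
      · exact hxM
      · exact hyM
      · exact hzM
    rw [hgen] at hle
    intro w
    exact hle (IntermediateField.mem_top)
  have hFL : IntermediateField.fixedField (Subgroup.zpowers σ) ≤ L := by
    intro u hu
    have hσu := aux_fixed_apply σ hu
    obtain ⟨p, hp, q, hq, hu'⟩ := hMtop u
    have hσp := aux_fixed_apply σ (hLF hp)
    have hσq := aux_fixed_apply σ (hLF hq)
    rw [hu', map_add, map_mul, hσp, hσq, hσy] at hσu
    have hq0 : q = 0 := by
      by_contra hqq
      apply hya
      have h'' : ca / y = y := mul_left_cancel₀ hqq (by linear_combination hσu)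
      rw [div_eq_iff hy0] at h''
      linear_combination -h''
    rw [hu', hq0, zero_mul, add_zero]
    exact hp
  exact ⟨z0, z1, z2, z3, le_antisymm hLF hFL, hrel⟩

end Paper
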